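/- The concrete IDF state model Σ_IDF, consisting of pairs (h, π) of a partial heap h : L ⇀ V and a permission map π : L → [0,1] such that π(l) > 0 implies l ∈ dom(h), with the combination (h₁,π₁) ⊕ (h₂,π₂) defined iff for all l, π₁(l) + π₂(l) ≤ 1 and (l ∈ dom(h₁) ∩ dom(h₂) ⇒ h₁(l) = h₂(l)), and equal to (h₁ ∪ h₂, π₁ + π₂) when defined; with core |(h,π)| = (h, λl. 0); with stable(h,π) ⇔ dom(h) = {l | π(l) > 0}; and with stabilize(h,π) = ((λl. if π(l) > 0 then h(l) else ⊥), π); forms an IDF algebra, i.e., satisfies all IDF algebra axioms. -/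

import Mathlib

/-- An IDF algebra: a partial commutative monoid with core, stability predicate
and stabilization, satisfying the axioms of Dardinier et al.
Partiality of `⊕` is modeled via `Option`; `op a b = some c` asserts that
`a ⊕ b` is defined and equals `c`. -/
structure IDF (α : Type) where
  op : α → α → Option α
  core : α → α
  stable : α → Prop
  stabilize : α → α
  comm : ∀ a b, op a b = op b a
  assoc : ∀ a b c, (op a b).bind (fun x => op x c) = (op b c).bind (fun y => op a y)
  positivity : ∀ a b c, op a b = some c → op c c = some c → op a a = some a
  core_self : ∀ x, op x (core x) = some x
  core_dup : ∀ x, op (core x) (core x) = some (core x)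
  core_max : ∀ x c, op x c = some x → ∃ r, op c r = some (core x)
  core_add : ∀ a b c, op a b = some c → op (core a) (core b) = some (core c)
  cancel : ∀ x a b w, op x a = some w → op x b = some w → core a = core b → a = b
  stable_stabilize : ∀ ω, stable ω → stabilize ω = ω
  stabilize_stable : ∀ ω, stable (stabilize ω)
  stabilize_add : ∀ a b c, op a b = some c → op (stabilize a) (stabilize b) = some (stabilize c)
  stabilize_core : ∀ x, op (stabilize x) (core x) = some x
  stabilize_core_unit : ∀ a b c, op b (stabilize (core c)) = some a → a = b

namespace IDF

variable {α : Type}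

/-- `Alg.ge x y` means `x ⪰ y`, i.e. `∃ r, x = y ⊕ r`. -/
def ge (Alg : IDF α) (x y : α) : Prop := ∃ r, Alg.op y r = some x

/-- Separating conjunction of (semantic) assertions. -/
def star (Alg : IDF α) (P Q : Set α) : Set α :=
  {ω | ∃ p ∈ P, ∃ q ∈ Q, Alg.op p q = some ω}

/-- `P` is self-framing. -/
def selfFraming (Alg : IDF α) (P : Set α) : Prop :=
  ∀ ω, ω ∈ P ↔ Alg.stabilize ω ∈ P

/-- The state `ω` frames the assertion `P`. -/
def framesState (Alg : IDF α) (ω : α) (P : Set α) : Prop :=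
  Alg.selfFraming (Alg.star {ω} P)

/-- The assertion `B` frames the assertion `P`: every stable state of `B` frames `P`. -/
def framesAssert (Alg : IDF α) (B P : Set α) : Prop :=
  ∀ ω ∈ B, Alg.stable ω → Alg.framesState ω P

end IDF

/-! The concrete IDF state model `Σ_IDF`: partial heaps with fractional
permissions in `[0,1]`, where nonzero permission implies a value exists. -/

/-- A state of `Σ_IDF`: a partial heap `h : L ⇀ V` and a permission map
`π : L → [0,1]` with `π(l) > 0 → l ∈ dom(h)`. -/
structure IDFState (L V : Type) where
  h : L → Option V
  π : L → ℝ
  nonneg : ∀ l, 0 ≤ π l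
  le_one : ∀ l, π l ≤ 1
  inv : ∀ l, 0 < π l → (h l).isSome

namespace IDFState

variable {L V : Type}

open Classical

/-- Combination on `Σ_IDF`: defined iff permissions sum to at most 1 and the
heaps agree on their common domain; the result is the union of heaps and the
sum of permissions. -/
noncomputable def idfOp (s1 s2 : IDFState L V) : Option (IDFState L V) :=
  if hc : (∀ l, s1.π l + s2.π l ≤ 1) ∧
          (∀ l, (s1.h l).isSome → (s2.h l).isSome → s1.h l = s2.h l) then
    some { h := fun l => (s1.h l).or (s2.h l)
           π := fun l => s1.π l + s2.π l
           nonneg := fun l => add_nonneg (s1.nonneg l) (s2.nonneg l)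
           le_one := fun l => hc.1 l
           inv := by
             intro l hl
             have hl' : 0 < s1.π l + s2.π l := hl
             rcases lt_or_ge 0 (s1.π l) with h1 | h1
             · have hs := s1.inv l h1
               cases e : s1.h l with
               | none => rw [e] at hs; simp at hs
               | some v => simp [Option.or, e]
             · have h2 : 0 < s2.π l := by linarith
               have hs := s2.inv l h2
               cases e : s1.h l with
               | none => simpa [Option.or, e] using hs
               | some v => simp [Option.or, e] }
  else none

/-- Core: keep the heap, zero all permissions. -/
def idfCore (s : IDFState L V) : IDFState L V :=
  { h := s.h
    π := fun _ => 0
    nonneg := fun _ => le_refl 0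
    le_one := fun _ => zero_le_one
    inv := fun _ hl => absurd hl (lt_irrefl 0) }

/-- Stability: the heap has a value exactly at locations with nonzero
permission. -/
def idfStable (s : IDFState L V) : Prop :=
  ∀ l, (s.h l).isSome ↔ 0 < s.π l

/-- Stabilization: erase heap values at locations with zero permission. -/
noncomputable def idfStabilize (s : IDFState L V) : IDFState L V :=
  { h := fun l => if 0 < s.π l then s.h l else none
    π := s.π
    nonneg := s.nonneg
    le_one := s.le_one
    inv := by intro l hl; simpa [hl] using s.inv l hl }

/-! ### Auxiliary lemmas -/

theorem ext'' {s t : IDFState L V} (hh : s.h = t.h) (hp : s.π = t.π) : s = t := by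
  cases s; cases t; simp_all

/-- Heaps agree on their common domain. -/
def agree (s t : IDFState L V) : Prop :=
  ∀ l, (s.h l).isSome → (t.h l).isSome → s.h l = t.h l

theorem op_eq_some_iff {s1 s2 s : IDFState L V} :
    idfOp s1 s2 = some s ↔
      (∀ l, s1.π l + s2.π l ≤ 1) ∧ agree s1 s2 ∧
        s.h = (fun l => (s1.h l).or (s2.h l)) ∧ s.π = (fun l => s1.π l + s2.π l) := by
  unfold idfOp
  split_ifs with hc
  · constructor
    · rintro h
      injection h with h
      subst h
      exact ⟨hc.1, hc.2, rfl, rfl⟩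
    · rintro ⟨_, _, hh, hp⟩
      exact congrArg some (ext'' hh hp).symm
  · constructor
    · rintro ⟨⟩
    · rintro ⟨h1, h2, _⟩
      exact absurd ⟨h1, h2⟩ hc

theorem or_self' (o : Option V) : o.or o = o := by cases o <;> rfl

theorem or_comm_of_agree {o1 o2 : Option V}
    (h : o1.isSome → o2.isSome → o1 = o2) : o1.or o2 = o2.or o1 := by
  cases o1 <;> cases o2 <;> simp_all

theorem op_comm' (s1 s2 : IDFState L V) : idfOp s1 s2 = idfOp s2 s1 := by
  have key : ∀ (a b : IDFState L V) s, idfOp a b = some s → idfOp b a = some s := by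
    intro a b s h
    rw [op_eq_some_iff] at h ⊢
    obtain ⟨h1, h2, hh, hp⟩ := h
    refine ⟨fun l => by linarith [h1 l], fun l x y => (h2 l y x).symm, ?_, ?_⟩
    · funext l; rw [congrFun hh l, or_comm_of_agree (h2 l)]
    · funext l; rw [congrFun hp l, add_comm]
  apply Option.ext
  intro s
  exact ⟨key s1 s2 s, key s2 s1 s⟩

/-- Characterization of the defined triple combination (left associated). -/
theorem triple_some_iff {a b c w : IDFState L V} :
    (idfOp a b).bind (fun x => idfOp x c) = some w ↔
      (∀ l, a.π l + b.π l + c.π l ≤ 1) ∧ agree a b ∧ agree a c ∧ agree b c ∧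
        w.h = (fun l => ((a.h l).or (b.h l)).or (c.h l)) ∧
        w.π = (fun l => a.π l + b.π l + c.π l) := by
  rw [Option.bind_eq_some_iff]
  constructor
  · rintro ⟨x, hab, hxc⟩
    rw [op_eq_some_iff] at hab hxc
    obtain ⟨p1, g1, hh1, hp1⟩ := hab
    obtain ⟨p2, g2, hh2, hp2⟩ := hxc
    have ptot : ∀ l, a.π l + b.π l + c.π l ≤ 1 := by
      intro l; have := p2 l; rw [congrFun hp1 l] at this; linarith
    have gac : agree a c := by
      intro l ha hc'
      have hx : x.h l = a.h l := by
        rw [congrFun hh1 l]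
        cases e : a.h l with
        | none => rw [e] at ha; simp at ha
        | some v => simp
      have := g2 l (by rw [hx]; exact ha) hc'
      rw [hx] at this; exact this
    have gbc : agree b c := by
      intro l hb hc'
      cases e : a.h l with
      | none =>
        have hx : x.h l = b.h l := by rw [congrFun hh1 l, e]; rfl
        have := g2 l (by rw [hx]; exact hb) hc'
        rw [hx] at this; exact this
      | some v =>
        have hab' := g1 l (by rw [e]; rfl) hb
        have := gac l (by rw [e]; rfl) hc'
        rw [← hab']; exact this
    refine ⟨ptot, g1, gac, gbc, ?_, ?_⟩
    · rw [hh2]; funext l; rw [congrFun hh1 l]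
    · rw [hp2]; funext l; rw [congrFun hp1 l]
  · rintro ⟨ptot, gab, gac, gbc, hh, hp⟩
    have pab : ∀ l, a.π l + b.π l ≤ 1 := by
      intro l; have := ptot l; have := c.nonneg l; linarith
    have hx : ∃ x, idfOp a b = some x := by
      unfold idfOp; rw [dif_pos ⟨pab, gab⟩]; exact ⟨_, rfl⟩
    obtain ⟨x, hab⟩ := hx
    refine ⟨x, hab, ?_⟩
    rw [op_eq_some_iff] at hab ⊢
    obtain ⟨_, _, hh1, hp1⟩ := hab
    refine ⟨?_, ?_, ?_, ?_⟩
    · intro l; rw [congrFun hp1 l]; exact ptot l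
    · intro l hxl hcl
      rw [congrFun hh1 l] at hxl ⊢
      cases e : a.h l with
      | none =>
        simp only [e, Option.none_or] at hxl ⊢
        exact gbc l hxl hcl
      | some v =>
        have hv : (some v).or (b.h l) = some v := rfl
        rw [hv, ← e]
        exact gac l (by rw [e]; rfl) hcl
    · rw [hh]; funext l; rw [congrFun hh1 l]
    · rw [hp]; funext l; rw [congrFun hp1 l]

theorem or3 {o1 o2 o3 : Option V}
    (h12 : o1.isSome → o2.isSome → o1 = o2)
    (h13 : o1.isSome → o3.isSome → o1 = o3)
    (h23 : o2.isSome → o3.isSome → o2 = o3) :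
    (o1.or o2).or o3 = (o2.or o3).or o1 := by
  cases o1 <;> cases o2 <;> cases o3 <;> simp_all

theorem op_assoc' (a b c : IDFState L V) :
    ((idfOp a b).bind fun x => idfOp x c) = (idfOp b c).bind fun y => idfOp a y := by
  apply Option.ext
  intro w
  rw [triple_some_iff]
  have hsw : ((idfOp b c).bind fun y => idfOp a y) = ((idfOp b c).bind fun y => idfOp y a) := by
    congr 1; funext y; exact op_comm' a y
  rw [hsw, triple_some_iff]
  constructor
  · rintro ⟨p, gab, gac, gbc, hh, hp⟩
    refine ⟨fun l => by linarith [p l], gbc, fun l x y => (gab l y x).symm,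
      fun l x y => (gac l y x).symm, ?_, ?_⟩
    · rw [hh]; funext l; exact or3 (gab l) (gac l) (gbc l)
    · rw [hp]; funext l; ring
  · rintro ⟨p, gbc, gba, gca, hh, hp⟩
    refine ⟨fun l => by linarith [p l], fun l x y => (gba l y x).symm,
      fun l x y => (gca l y x).symm, gbc, ?_, ?_⟩
    · rw [hh]; funext l
      exact (or3 (fun x y => (gba l y x).symm) (fun x y => (gca l y x).symm) (gbc l)).symm
    · rw [hp]; funext l; ring

end IDFState

open IDFState in
/-- the concrete state model `Σ_IDF` with the combination, core,
stability predicate and stabilization defined above forms an IDF algebra,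
i.e. satisfies all IDF algebra axioms. -/
theorem sigmaIDF_isIDFAlgebra (L V : Type) :
    ∃ Alg : IDF (IDFState L V),
      Alg.op = idfOp ∧ Alg.core = idfCore ∧
      Alg.stable = idfStable ∧ Alg.stabilize = idfStabilize := by
  refine ⟨{ op := idfOp, core := idfCore, stable := idfStable, stabilize := idfStabilize
            comm := op_comm'
            assoc := op_assoc'
            positivity := ?_
            core_self := ?_
            core_dup := ?_
            core_max := ?_
            core_add := ?_
            cancel := ?_
            stable_stabilize := ?_
            stabilize_stable := ?_
            stabilize_add := ?_
            stabilize_core := ?_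
            stabilize_core_unit := ?_ }, rfl, rfl, rfl, rfl⟩
  -- positivity
  · intro a b c h1 h2
    rw [op_eq_some_iff] at h1 h2 ⊢
    obtain ⟨_, _, _, hp1⟩ := h1
    obtain ⟨_, _, _, hp2⟩ := h2
    have hc0 : ∀ l, c.π l = 0 := by
      intro l; have := congrFun hp2 l; simp at this; linarith
    have ha0 : ∀ l, a.π l = 0 := by
      intro l
      have e := congrFun hp1 l
      have := a.nonneg l; have := b.nonneg l; have := hc0 l
      linarith
    refine ⟨fun l => by rw [ha0 l]; norm_num, fun l x y => rfl, ?_, ?_⟩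
    · funext l; exact (or_self' _).symm
    · funext l; rw [ha0 l]; norm_num
  -- core_self
  · intro x
    rw [op_eq_some_iff]
    refine ⟨fun l => by simpa [idfCore] using x.le_one l, fun l hx hc => rfl, ?_, ?_⟩
    · funext l; exact (or_self' _).symm
    · funext l; simp [idfCore]
  -- core_dup
  · intro x
    rw [op_eq_some_iff]
    refine ⟨fun l => by simp [idfCore], fun l hx hc => rfl, ?_, ?_⟩
    · funext l; exact (or_self' _).symm
    · funext l; simp [idfCore]
  -- core_max
  · intro x c h
    rw [op_eq_some_iff] at h
    obtain ⟨hp, hag, hh, hπ⟩ := h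
    have hc0 : ∀ l, c.π l = 0 := by
      intro l; have := congrFun hπ l; linarith
    have hsub : ∀ l, (c.h l).isSome → c.h l = x.h l := by
      intro l hcl
      have hxl : (x.h l).isSome := by
        by_contra hx
        rw [Option.not_isSome_iff_eq_none] at hx
        have hhl := congrFun hh l
        rw [hx, Option.none_or] at hhl
        rw [← hhl] at hcl
        simp at hcl
      exact (hag l hxl hcl).symm
    refine ⟨idfCore x, ?_⟩
    rw [op_eq_some_iff]
    refine ⟨fun l => by simp [idfCore, hc0 l], fun l hc hx => hsub l hc, ?_, ?_⟩
    · funext l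
      show x.h l = (c.h l).or (x.h l)
      cases e : c.h l with
      | none => rw [Option.none_or]
      | some v =>
        have := hsub l (by rw [e]; rfl)
        rw [e] at this
        rw [← this]; rfl
    · funext l; simp [idfCore, hc0 l]
  -- core_add
  · intro a b c h
    rw [op_eq_some_iff] at h ⊢
    obtain ⟨hp, hag, hh, hπ⟩ := h
    exact ⟨fun l => by simp [idfCore], hag, hh, by funext l; simp [idfCore]⟩
  -- cancel
  · intro x a b w h1 h2 hc
    rw [op_eq_some_iff] at h1 h2
    have hh := congrArg IDFState.h hc
    have hπ : a.π = b.π := by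
      funext l
      have e1 := congrFun h1.2.2.2 l
      have e2 := congrFun h2.2.2.2 l
      linarith
    exact ext'' hh hπ
  -- stable_stabilize
  · intro ω hs
    apply ext''
    · funext l
      show (if 0 < ω.π l then ω.h l else none) = ω.h l
      split_ifs with hl
      · rfl
      · cases e : ω.h l with
        | none => rfl
        | some v => exact absurd ((hs l).mp (by rw [e]; rfl)) hl
    · rfl
  -- stabilize_stable
  · intro ω l
    show (if 0 < ω.π l then ω.h l else none).isSome ↔ 0 < ω.π l
    split_ifs with hl
    · simp [ω.inv l hl, hl]
    · simp [hl]
  -- stabilize_add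
  · intro a b c h
    rw [op_eq_some_iff] at h ⊢
    obtain ⟨hp, hag, hh, hπ⟩ := h
    refine ⟨hp, ?_, ?_, hπ⟩
    · intro l ha hb
      by_cases h1 : 0 < a.π l
      · by_cases h2 : 0 < b.π l
        · simpa [idfStabilize, h1, h2] using
            hag l (by simpa [idfStabilize, h1] using ha) (by simpa [idfStabilize, h2] using hb)
        · simp [idfStabilize, h2] at hb
      · simp [idfStabilize, h1] at ha
    · funext l
      have hπl : c.π l = a.π l + b.π l := congrFun hπ l
      have hhl : c.h l = (a.h l).or (b.h l) := congrFun hh l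
      show (if 0 < c.π l then c.h l else none)
        = (if 0 < a.π l then a.h l else none).or (if 0 < b.π l then b.h l else none)
      by_cases h1 : 0 < a.π l
      · have hcpos : 0 < c.π l := by have := b.nonneg l; rw [hπl]; linarith
        have has : (a.h l).isSome := a.inv l h1
        rw [if_pos hcpos, if_pos h1, hhl]
        cases e : a.h l with
        | none => rw [e] at has; simp at has
        | some v => rfl
      · by_cases h2 : 0 < b.π l
        · have hcpos : 0 < c.π l := by have := a.nonneg l; rw [hπl]; linarith
          have hbs : (b.h l).isSome := b.inv l h2
          rw [if_pos hcpos, if_neg h1, if_pos h2, hhl, Option.none_or]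
          cases e : a.h l with
          | none => rw [Option.none_or]
          | some v =>
            have h3 := hag l (by rw [e]; rfl) hbs
            rw [e] at h3
            rw [← h3]
            exact or_self' _
        · have hcneg : ¬ 0 < c.π l := by
            have := a.nonneg l; have := b.nonneg l
            rw [not_lt] at h1 h2 ⊢; rw [hπl]; linarith
          rw [if_neg hcneg, if_neg h1, if_neg h2]; rfl
  -- stabilize_core
  · intro x
    rw [op_eq_some_iff]
    refine ⟨fun l => by simpa [idfCore, idfStabilize] using x.le_one l, ?_, ?_, ?_⟩
    · intro l hs hc
      show (idfStabilize x).h l = x.h l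
      by_cases hl : 0 < x.π l
      · show (if 0 < x.π l then x.h l else none) = x.h l; rw [if_pos hl]
      · have : (idfStabilize x).h l = none := by
          show (if 0 < x.π l then x.h l else none) = none; rw [if_neg hl]
        rw [this] at hs; simp at hs
    · funext l
      show x.h l = ((if 0 < x.π l then x.h l else none).or (x.h l))
      split_ifs with hl
      · rw [or_self']
      · rw [Option.none_or]
    · funext l; simp [idfStabilize, idfCore]
  -- stabilize_core_unit
  · intro a b c h
    rw [op_eq_some_iff] at h
    obtain ⟨_, _, hh, hπ⟩ := h
    apply ext''
    · rw [hh]; funext l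
      show (b.h l).or (if 0 < (0:ℝ) then (idfCore c).h l else none) = b.h l
      rw [if_neg (lt_irrefl (0:ℝ)), Option.or_none]
    · rw [hπ]; funext l; simp [idfStabilize, idfCore]
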